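/- Let V be a finite set of points in the plane with all pairwise distances distinct, and let c ∈ V. Then for every integer s ≥ 1, the number of points v ∈ V \ {c} such that c is among the s nearest points of V \ {v} to v is at most 6s. In particular, a candidate can be one of the top-s choices of at most 6(s-1)+1 voters when the point itself is also counted as a voter. -/

import Mathlib

open scoped Classical

noncomputable def sectorIdx (z : ℂ) : ℕ := min 5 (⌊(z.arg + Real.pi) / (Real.pi / 3)⌋).toNat

lemma sectorIdx_lt_six (z : ℂ) : sectorIdx z < 6 := by
  have : sectorIdx z ≤ 5 := min_le_left _ _
  omega

lemma min_floor_bounds {t : ℝ} (ht0 : 0 < t) (ht6 : t ≤ 6) :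
    ((min 5 (⌊t⌋).toNat : ℕ) : ℝ) ≤ t ∧ t ≤ (min 5 (⌊t⌋).toNat : ℕ) + 1 := by
  have hfl0 : 0 ≤ ⌊t⌋ := Int.floor_nonneg.2 ht0.le
  have hfl6 : ⌊t⌋ ≤ 6 := by
    have : (⌊t⌋ : ℝ) ≤ 6 := le_trans (Int.floor_le t) ht6
    exact_mod_cast this
  have hle := Int.floor_le t
  have hlt := Int.lt_floor_add_one t
  rcases le_or_gt ⌊t⌋ 5 with h5 | h5
  · have hidx : ((min 5 (⌊t⌋).toNat : ℕ) : ℤ) = ⌊t⌋ := by omega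
    constructor
    · calc ((min 5 (⌊t⌋).toNat : ℕ) : ℝ) = ((⌊t⌋ : ℤ) : ℝ) := by
            exact_mod_cast congrArg (fun n : ℤ => (n:ℝ)) hidx
        _ ≤ t := hle
    · have : t < ((min 5 (⌊t⌋).toNat : ℕ) : ℝ) + 1 := by
        have : ((min 5 (⌊t⌋).toNat : ℕ) : ℝ) = ((⌊t⌋ : ℤ) : ℝ) := by
          exact_mod_cast congrArg (fun n : ℤ => (n:ℝ)) hidx
        rw [this]; exact hlt
      linarith
  · have h6 : ⌊t⌋ = 6 := by omega
    have hidx : min 5 (⌊t⌋).toNat = 5 := by omega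
    rw [hidx]
    have h6t : (6:ℝ) ≤ t := by
      have : ((6:ℤ):ℝ) ≤ t := h6 ▸ hle
      exact_mod_cast this
    constructor
    · push_cast; linarith
    · push_cast; linarith

lemma sectorIdx_bounds (z : ℂ) :
    (sectorIdx z : ℝ) ≤ (z.arg + Real.pi) / (Real.pi / 3) ∧
    (z.arg + Real.pi) / (Real.pi / 3) ≤ sectorIdx z + 1 := by
  have hpi : (0:ℝ) < Real.pi / 3 := by positivity
  have ht0 : 0 < (z.arg + Real.pi) / (Real.pi / 3) := by
    apply div_pos _ hpi
    have := Complex.neg_pi_lt_arg z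
    linarith
  have ht6 : (z.arg + Real.pi) / (Real.pi / 3) ≤ 6 := by
    rw [div_le_iff₀ hpi]
    have := Complex.arg_le_pi z
    linarith [Real.pi_pos]
  exact min_floor_bounds ht0 ht6

lemma arg_close_of_sectorIdx_eq {z w : ℂ} (h : sectorIdx z = sectorIdx w) :
    |z.arg - w.arg| ≤ Real.pi / 3 := by
  have hpi : (0:ℝ) < Real.pi / 3 := by positivity
  obtain ⟨h1, h2⟩ := sectorIdx_bounds z
  obtain ⟨h3, h4⟩ := sectorIdx_bounds w
  rw [h] at h1 h2
  have ez : z.arg + Real.pi = ((z.arg + Real.pi) / (Real.pi / 3)) * (Real.pi / 3) :=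
    (div_mul_cancel₀ _ hpi.ne').symm
  have ew : w.arg + Real.pi = ((w.arg + Real.pi) / (Real.pi / 3)) * (Real.pi / 3) :=
    (div_mul_cancel₀ _ hpi.ne').symm
  rw [abs_le]
  constructor <;> nlinarith [mul_le_mul_of_nonneg_right h1 hpi.le,
    mul_le_mul_of_nonneg_right h2 hpi.le, mul_le_mul_of_nonneg_right h3 hpi.le,
    mul_le_mul_of_nonneg_right h4 hpi.le]

open Complex in
lemma re_mul_conj' (z w : ℂ) :
    (z * (starRingEnd ℂ) w).re = ‖z‖ * ‖w‖ * Real.cos (z.arg - w.arg) := by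
  conv_lhs => rw [← Complex.norm_mul_exp_arg_mul_I z, ← Complex.norm_mul_exp_arg_mul_I w]
  rw [map_mul, ← Complex.exp_conj, Complex.conj_ofReal]
  have hconj : (starRingEnd ℂ) (↑w.arg * I) = (((-w.arg : ℝ)):ℂ) * I := by
    rw [map_mul, Complex.conj_ofReal, Complex.conj_I]; push_cast; ring
  rw [hconj, mul_mul_mul_comm, ← Complex.exp_add,
    show ((z.arg :ℂ) * I + ((-w.arg:ℝ):ℂ) * I) = ((z.arg - w.arg : ℝ) : ℂ) * I by push_cast; ring,
    mul_assoc, Complex.re_ofReal_mul, Complex.re_ofReal_mul, Complex.exp_ofReal_mul_I_re, mul_assoc]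

lemma key_close {z w : ℂ} (hz : z ≠ 0) (hab : ‖z‖ ≤ ‖w‖)
    (harg : |z.arg - w.arg| ≤ Real.pi / 3) : ‖z - w‖ ≤ ‖w‖ := by
  have hcos : (1:ℝ)/2 ≤ Real.cos (z.arg - w.arg) := by
    rw [← Real.cos_abs, ← Real.cos_pi_div_three]
    apply Real.cos_le_cos_of_nonneg_of_le_pi (abs_nonneg _) _ harg
    linarith [Real.pi_pos]
  have h0 : 0 < ‖z‖ := norm_pos_iff.2 hz
  have hns : Complex.normSq (z - w) ≤ Complex.normSq w := by
    rw [Complex.normSq_sub, ← Complex.sq_norm z, ← Complex.sq_norm w, re_mul_conj']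
    nlinarith [mul_le_mul_of_nonneg_left hcos
        (by positivity : (0:ℝ) ≤ 2 * (‖z‖ * ‖w‖)),
      mul_le_mul_of_nonneg_left hab h0.le]
  calc ‖z - w‖ = Real.sqrt (Complex.normSq (z - w)) := Complex.norm_def _
    _ ≤ Real.sqrt (Complex.normSq w) := Real.sqrt_le_sqrt hns
    _ = ‖w‖ := (Complex.norm_def _).symm

/-- For a finite point set `V` in the plane with all pairwise distances
distinct and `c ∈ V`, for every `s ≥ 1`, at most `6s` points `v ∈ V \ {c}` have `c`
among the `s` nearest points of `V \ {v}` (rank of `c` for `v` is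
`1 + #{c' ∈ V \ {v} : dist v c' < dist v c}`). -/
theorem top_s_count (V : Finset (EuclideanSpace ℝ (Fin 2)))
    (hdist : ∀ x ∈ V, ∀ y ∈ V, ∀ z ∈ V, ∀ w ∈ V,
      x ≠ y → z ≠ w → dist x y = dist z w → (x = z ∧ y = w) ∨ (x = w ∧ y = z))
    (c : EuclideanSpace ℝ (Fin 2)) (hc : c ∈ V) (s : ℕ) (hs : 1 ≤ s) :
    ((V.erase c).filter fun v =>
      ((V.erase v).filter fun c' => dist v c' < dist v c).card + 1 ≤ s).card ≤ 6 * s := by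
  set f := (Complex.isometryOfOrthonormal (EuclideanSpace.basisFun (Fin 2) ℝ)).symm with hf
  have hdistf : ∀ v w : EuclideanSpace ℝ (Fin 2), ‖f v - f w‖ = dist v w := by
    intro v w
    rw [← LinearIsometryEquiv.map_sub, f.norm_map, ← dist_eq_norm]
  set S := ((V.erase c).filter fun v =>
      ((V.erase v).filter fun c' => dist v c' < dist v c).card + 1 ≤ s) with hS
  have hcard := Finset.card_eq_sum_card_fiberwise
    (f := fun v => sectorIdx (f v - f c)) (s := S) (t := Finset.range 6)
    (fun v _ => Finset.mem_range.2 (sectorIdx_lt_six _))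
  rw [hcard]
  have hfiber : ∀ k ∈ Finset.range 6,
      (S.filter fun v => sectorIdx (f v - f c) = k).card ≤ s := by
    intro k _
    by_contra hT
    push_neg at hT
    set T := S.filter fun v => sectorIdx (f v - f c) = k with hTdef
    have hTne : T.Nonempty := Finset.card_pos.1 (by omega)
    obtain ⟨w, hwT, hwmax⟩ := T.exists_max_image (fun v => dist v c) hTne
    have hmemT : ∀ v ∈ T, v ∈ V ∧ v ≠ c ∧ sectorIdx (f v - f c) = k := by
      intro v hv
      obtain ⟨hvS, hvk⟩ := Finset.mem_filter.1 hv
      obtain ⟨hvE, _⟩ := Finset.mem_filter.1 hvS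
      exact ⟨Finset.mem_of_mem_erase hvE, Finset.ne_of_mem_erase hvE, hvk⟩
    obtain ⟨hwV, hwc, hwk⟩ := hmemT w hwT
    have hkey : ∀ v ∈ T.erase w, dist w v < dist w c := by
      intro v hv
      have hvw : v ≠ w := Finset.ne_of_mem_erase hv
      obtain ⟨hvV, hvc, hvk⟩ := hmemT v (Finset.mem_of_mem_erase hv)
      have hz : f v - f c ≠ 0 := by
        rw [sub_ne_zero]
        exact fun h => hvc (f.injective h)
      have hab : ‖f v - f c‖ ≤ ‖f w - f c‖ := by
        rw [hdistf, hdistf]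
        exact hwmax v (Finset.mem_of_mem_erase hv)
      have harg : |(f v - f c).arg - (f w - f c).arg| ≤ Real.pi / 3 :=
        arg_close_of_sectorIdx_eq (hvk.trans hwk.symm)
      have hle : dist v w ≤ dist w c := by
        have := key_close hz hab harg
        rw [show f v - f c - (f w - f c) = f v - f w by ring, hdistf, hdistf] at this
        exact this
      have hne : dist w v ≠ dist w c := by
        intro heq
        rcases hdist w hwV v hvV w hwV c hc (Ne.symm hvw) hwc heq with ⟨_, h⟩ | ⟨h, _⟩
        · exact hvc h
        · exact hwc h
      rw [dist_comm] at hle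
      exact lt_of_le_of_ne hle hne
    have hsub : T.erase w ⊆ (V.erase w).filter fun c' => dist w c' < dist w c := by
      intro v hv
      obtain ⟨hvV, _, _⟩ := hmemT v (Finset.mem_of_mem_erase hv)
      exact Finset.mem_filter.2 ⟨Finset.mem_erase.2 ⟨Finset.ne_of_mem_erase hv, hvV⟩, hkey v hv⟩
    have h1 : (T.erase w).card = T.card - 1 := Finset.card_erase_of_mem hwT
    have h2 := Finset.card_le_card hsub
    have h3 : ((V.erase w).filter fun c' => dist w c' < dist w c).card + 1 ≤ s := by
      have := (Finset.mem_filter.1 (Finset.mem_filter.1 hwT).1).2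
      exact this
    omega
  calc ∑ k ∈ Finset.range 6, (S.filter fun v => sectorIdx (f v - f c) = k).card
      ≤ ∑ _k ∈ Finset.range 6, s := Finset.sum_le_sum hfiber
    _ = 6 * s := by simp [Finset.sum_const, Finset.card_range]
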